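/- In the setting of the dyadic quantile grid a_j := F₀⁻¹(u_j) with u_j := 2^{j−1} for j ≤ 0 and u_j := 1 − 2^{−(j+1)} for j ≥ 1, for a continuous log-concave density f₀, the consecutive gaps satisfy (a_j − a_{j−1})/8 ≤ a_{j+1} − a_j ≤ 8(a_j − a_{j−1}) for all j ∈ ℤ. -/

import Mathlib

open MeasureTheory Real

/-- The dyadic grid of quantile levels: `u_j = 2^{j−1}` for `j ≤ 0` and
`u_j = 1 − 2^{−(j+1)}` for `j ≥ 1`. -/
noncomputable def uGrid (j : ℤ) : ℝ := if j ≤ 0 then (2:ℝ) ^ (j - 1) else 1 - (2:ℝ) ^ (-(j + 1))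

theorem fourPoint (f₀ : ℝ → ℝ) (hf_nonneg : ∀ x, 0 ≤ f₀ x)
    (hlogconc : ∀ x y : ℝ, ∀ t ∈ Set.Icc (0:ℝ) 1,
      f₀ x ^ t * f₀ y ^ (1 - t) ≤ f₀ (t * x + (1 - t) * y))
    {a b c d : ℝ} (hac : a ≤ c) (hcb : c ≤ b) (had : a ≤ d)
    (hsum : c + d = a + b) :
    f₀ a * f₀ b ≤ f₀ c * f₀ d := by
  rcases eq_or_lt_of_le (hac.trans hcb) with hab | hab
  · have hca : c = a := le_antisymm (by linarith) hac
    have hdb : d = b := by linarith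
    rw [hca, hdb]
  · set t : ℝ := (b - c) / (b - a) with ht
    have hba : (0:ℝ) < b - a := by linarith
    have ht0 : 0 ≤ t := div_nonneg (by linarith) hba.le
    have ht1 : t ≤ 1 := by
      rw [ht, div_le_one hba]; linarith
    have htb : t * (b - a) = b - c := div_mul_cancel₀ _ hba.ne'
    have hc : t * a + (1 - t) * b = c := by linear_combination -htb
    have hd : (1 - t) * a + (1 - (1 - t)) * b = d := by linear_combination htb - hsum
    have h1 := hlogconc a b t ⟨ht0, ht1⟩
    have h2 := hlogconc a b (1 - t) ⟨by linarith, by linarith⟩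
    rw [hc] at h1
    rw [hd] at h2
    have hRnn : 0 ≤ f₀ c * f₀ d := mul_nonneg (hf_nonneg c) (hf_nonneg d)
    rcases eq_or_lt_of_le (hf_nonneg a) with ha0 | ha0
    · calc f₀ a * f₀ b = 0 := by rw [← ha0]; ring
        _ ≤ _ := hRnn
    rcases eq_or_lt_of_le (hf_nonneg b) with hb0 | hb0
    · calc f₀ a * f₀ b = 0 := by rw [← hb0]; ring
        _ ≤ _ := hRnn
    have ea : f₀ a ^ t * f₀ a ^ (1 - t) = f₀ a := by
      rw [← Real.rpow_add ha0]; norm_num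
    have eb : f₀ b ^ (1 - t) * f₀ b ^ (1 - (1 - t)) = f₀ b := by
      rw [← Real.rpow_add hb0]; norm_num
    have hkey : (f₀ a ^ t * f₀ b ^ (1 - t)) * (f₀ a ^ (1 - t) * f₀ b ^ (1 - (1 - t)))
        = f₀ a * f₀ b := by
      rw [mul_mul_mul_comm, ea, eb]
    rw [← hkey]
    exact mul_le_mul h1 h2
      (mul_nonneg (Real.rpow_nonneg (hf_nonneg a) _) (Real.rpow_nonneg (hf_nonneg b) _))
      (hf_nonneg c)

theorem revHazardAux (f₀ : ℝ → ℝ) (hf_nonneg : ∀ x, 0 ≤ f₀ x) (hf_int : Integrable f₀ volume)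
    (hlogconc : ∀ x y : ℝ, ∀ t ∈ Set.Icc (0:ℝ) 1,
      f₀ x ^ t * f₀ y ^ (1 - t) ≤ f₀ (t * x + (1 - t) * y))
    {x y : ℝ} (hxy : x ≤ y) :
    f₀ y * ∫ t in Set.Iic x, f₀ t ≤ f₀ x * ∫ t in Set.Iic y, f₀ t := by
  set c : ℝ := y - x with hc
  have hc0 : 0 ≤ c := by simp [hc]; linarith
  have hshift : ∫ t in Set.Iic x, f₀ t = ∫ t in Set.Iic y, f₀ (t - c) := by
    have h3 : ∀ t : ℝ, (Set.Iic y).indicator (fun s => f₀ (s - c)) t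
        = (Set.Iic x).indicator f₀ (t - c) := by
      intro t
      by_cases h : t ≤ y
      · rw [Set.indicator_of_mem (by exact h) , Set.indicator_of_mem]
        simp [hc]; linarith
      · rw [Set.indicator_of_notMem (by exact h), Set.indicator_of_notMem]
        simp [hc]; push_neg at h; linarith
    rw [← integral_indicator measurableSet_Iic, ← integral_indicator measurableSet_Iic]
    rw [show (fun t => (Set.Iic y).indicator (fun s => f₀ (s - c)) t)
        = fun t => (Set.Iic x).indicator f₀ (t - c) from funext h3]
    exact (integral_sub_right_eq_self (μ := volume) ((Set.Iic x).indicator f₀) c).symm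
  calc f₀ y * ∫ t in Set.Iic x, f₀ t
      = ∫ t in Set.Iic y, f₀ y * f₀ (t - c) := by rw [hshift, integral_const_mul]
    _ ≤ ∫ t in Set.Iic y, f₀ x * f₀ t := by
        refine setIntegral_mono_on ?_ ?_ measurableSet_Iic ?_
        · exact ((hf_int.comp_sub_right c).const_mul _).integrableOn
        · exact (hf_int.const_mul _).integrableOn
        · intro t ht
          have h4 := fourPoint f₀ hf_nonneg hlogconc
            (a := t - c) (b := y) (c := x) (d := t)
            (by simp only [hc]; simp at ht; linarith) hxy (by linarith)
            (by simp [hc]; ring)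
          calc f₀ y * f₀ (t - c) = f₀ (t - c) * f₀ y := by ring
            _ ≤ f₀ x * f₀ t := h4
    _ = f₀ x * ∫ t in Set.Iic y, f₀ t := integral_const_mul _ _

theorem hazardAux (f₀ : ℝ → ℝ) (hf_nonneg : ∀ x, 0 ≤ f₀ x) (hf_int : Integrable f₀ volume)
    (hlogconc : ∀ x y : ℝ, ∀ t ∈ Set.Icc (0:ℝ) 1,
      f₀ x ^ t * f₀ y ^ (1 - t) ≤ f₀ (t * x + (1 - t) * y))
    {x y : ℝ} (hxy : x ≤ y) :
    f₀ x * ∫ t in Set.Ioi y, f₀ t ≤ f₀ y * ∫ t in Set.Ioi x, f₀ t := by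
  set c : ℝ := y - x with hc
  have hc0 : 0 ≤ c := by simp [hc]; linarith
  have hshift : ∫ t in Set.Ioi y, f₀ t = ∫ t in Set.Ioi x, f₀ (t + c) := by
    have h3 : ∀ t : ℝ, (Set.Ioi x).indicator (fun s => f₀ (s + c)) t
        = (Set.Ioi y).indicator f₀ (t + c) := by
      intro t
      by_cases h : x < t
      · rw [Set.indicator_of_mem (by exact h), Set.indicator_of_mem]
        simp [hc]; linarith
      · rw [Set.indicator_of_notMem (by exact h), Set.indicator_of_notMem]
        simp [hc]; push_neg at h; linarith
    rw [← integral_indicator measurableSet_Ioi, ← integral_indicator measurableSet_Ioi]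
    rw [show (fun t => (Set.Ioi x).indicator (fun s => f₀ (s + c)) t)
        = fun t => (Set.Ioi y).indicator f₀ (t + c) from funext h3]
    exact (integral_add_right_eq_self (μ := volume) ((Set.Ioi y).indicator f₀) c).symm
  calc f₀ x * ∫ t in Set.Ioi y, f₀ t
      = ∫ t in Set.Ioi x, f₀ x * f₀ (t + c) := by rw [hshift, integral_const_mul]
    _ ≤ ∫ t in Set.Ioi x, f₀ y * f₀ t := by
        refine setIntegral_mono_on ?_ ?_ measurableSet_Ioi ?_
        · exact ((hf_int.comp_add_right c).const_mul _).integrableOn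
        · exact (hf_int.const_mul _).integrableOn
        · intro t ht
          simp only [Set.mem_Ioi] at ht
          exact fourPoint f₀ hf_nonneg hlogconc
            (a := x) (b := t + c) (c := y) (d := t)
            hxy (by simp [hc]; linarith) ht.le (by simp [hc]; ring)
    _ = f₀ y * ∫ t in Set.Ioi x, f₀ t := integral_const_mul _ _


theorem uGrid_facts (j : ℤ) :
    0 < uGrid (j-1) ∧ uGrid (j-1) < uGrid j ∧ uGrid j < uGrid (j+1) ∧ uGrid (j+1) < 1 ∧
    (uGrid j - uGrid (j-1)) * uGrid (j+1) ≤ 8 * (uGrid (j-1) * (uGrid (j+1) - uGrid j)) ∧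
    (uGrid (j+1) - uGrid j) * (1 - uGrid (j-1)) ≤
      8 * ((uGrid j - uGrid (j-1)) * (1 - uGrid (j+1))) := by
  rcases lt_trichotomy j 0 with hj | hj | hj
  · -- j ≤ -1
    have h1 : j - 1 ≤ 0 := by omega
    have h2 : j ≤ 0 := by omega
    have h3 : j + 1 ≤ 0 := by omega
    rw [uGrid, uGrid, uGrid, if_pos h1, if_pos h2, if_pos h3]
    set x : ℝ := (2:ℝ) ^ (j - 2) with hx
    have hx0 : 0 < x := zpow_pos (by norm_num) _
    have e1 : (2:ℝ) ^ (j - 1 - 1) = x := by rw [hx, show j - 1 - 1 = j - 2 by ring]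
    have e2 : (2:ℝ) ^ (j - 1) = 2 * x := by
      rw [show j - 1 = (j - 2) + 1 by ring, zpow_add_one₀ (by norm_num : (2:ℝ) ≠ 0)]; ring
    have e3 : (2:ℝ) ^ (j + 1 - 1) = 4 * x := by
      rw [show j + 1 - 1 = (j - 2) + 1 + 1 by ring, zpow_add_one₀ (by norm_num : (2:ℝ) ≠ 0),
        zpow_add_one₀ (by norm_num : (2:ℝ) ≠ 0)]; ring
    have hxle : x ≤ 1/8 := by
      calc x ≤ (2:ℝ) ^ (-3 : ℤ) := by
            rw [hx]
            exact zpow_le_zpow_right₀ (by norm_num) (by omega)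
        _ = 1/8 := by norm_num
    rw [e1, e2, e3]
    refine ⟨hx0, by nlinarith, by nlinarith, by nlinarith, by nlinarith, by nlinarith⟩
  · subst hj
    norm_num [uGrid]
  · -- j ≥ 1
    rcases eq_or_lt_of_le (show (1:ℤ) ≤ j by omega) with hj1 | hj2
    · rw [← hj1]
      norm_num [uGrid]
    · -- j ≥ 2
      have h1 : ¬ (j - 1 ≤ 0) := by omega
      have h2 : ¬ (j ≤ 0) := by omega
      have h3 : ¬ (j + 1 ≤ 0) := by omega
      rw [uGrid, uGrid, uGrid, if_neg h1, if_neg h2, if_neg h3]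
      set y : ℝ := (2:ℝ) ^ (-(j + 2)) with hy
      have hy0 : 0 < y := zpow_pos (by norm_num) _
      have e1 : (2:ℝ) ^ (-(j - 1 + 1)) = 4 * y := by
        rw [show -(j - 1 + 1) = (-(j + 2)) + 1 + 1 by ring,
          zpow_add_one₀ (by norm_num : (2:ℝ) ≠ 0), zpow_add_one₀ (by norm_num : (2:ℝ) ≠ 0)]
        ring
      have e2 : (2:ℝ) ^ (-(j + 1)) = 2 * y := by
        rw [show -(j + 1) = (-(j + 2)) + 1 by ring, zpow_add_one₀ (by norm_num : (2:ℝ) ≠ 0)]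
        ring
      have e3 : (2:ℝ) ^ (-(j + 1 + 1)) = y := by rw [show -(j+1+1) = -(j+2) by ring]
      have hyle : y ≤ 1/16 := by
        calc y ≤ (2:ℝ) ^ (-4 : ℤ) := by
              rw [hy]
              exact zpow_le_zpow_right₀ (by norm_num) (by omega)
          _ = 1/16 := by norm_num
      rw [e1, e2, e3]
      refine ⟨by nlinarith, by nlinarith, by nlinarith, by nlinarith, by nlinarith, by nlinarith⟩


/-- Consecutive gaps of the dyadic quantile grid `a_j = F₀⁻¹(u_j)` of a continuous
log-concave density are comparable: `(a_j − a_{j−1})/8 ≤ a_{j+1} − a_j ≤ 8(a_j − a_{j−1})`. -/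
theorem dyadic_quantile_gap_comparison
    (f₀ : ℝ → ℝ) (hcont : Continuous f₀)
    (hf_nonneg : ∀ x, 0 ≤ f₀ x) (hf_int : Integrable f₀ volume) (hf_mass : ∫ x, f₀ x = 1)
    (hlogconc : ∀ x y : ℝ, ∀ t ∈ Set.Icc (0:ℝ) 1,
      f₀ x ^ t * f₀ y ^ (1 - t) ≤ f₀ (t * x + (1 - t) * y))
    (Finv : ℝ → ℝ) (hFinv : ∀ u ∈ Set.Ioo (0:ℝ) 1, (∫ t in Set.Iic (Finv u), f₀ t) = u)
    (ψ₀ : ℝ → ℝ)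
    (hψ : ∀ x : ℝ, 0 < f₀ x →
      HasDerivWithinAt (fun t => Real.log (f₀ t)) (ψ₀ x) (Set.Ici x) x)
    : ∀ j : ℤ,
      (Finv (uGrid j) - Finv (uGrid (j - 1))) / 8 ≤ Finv (uGrid (j + 1)) - Finv (uGrid j) ∧
      Finv (uGrid (j + 1)) - Finv (uGrid j) ≤ 8 * (Finv (uGrid j) - Finv (uGrid (j - 1))) := by
  intro j
  obtain ⟨hp0, hpq, hqr, hr1, g5, g6⟩ := uGrid_facts j
  set p := uGrid (j - 1) with hp
  set q := uGrid j with hq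
  set r := uGrid (j + 1) with hr
  set A := Finv p with hA
  set B := Finv q with hB
  set C := Finv r with hC
  have hq1 : q < 1 := by linarith
  have hp1 : p < 1 := by linarith
  have hq0 : 0 < q := by linarith
  have hr0 : 0 < r := by linarith
  have hFA : (∫ t in Set.Iic A, f₀ t) = p := hFinv p ⟨hp0, hp1⟩
  have hFB : (∫ t in Set.Iic B, f₀ t) = q := hFinv q ⟨hq0, hq1⟩
  have hFC : (∫ t in Set.Iic C, f₀ t) = r := hFinv r ⟨hr0, hr1⟩
  have hFmono : ∀ {a b : ℝ}, a ≤ b →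
      (∫ t in Set.Iic a, f₀ t) ≤ ∫ t in Set.Iic b, f₀ t := by
    intro a b hab
    exact setIntegral_mono_set hf_int.integrableOn
      (Filter.Eventually.of_forall fun t => hf_nonneg t)
      (HasSubset.Subset.eventuallyLE (Set.Iic_subset_Iic.mpr hab))
  have hGanti : ∀ {a b : ℝ}, a ≤ b →
      (∫ t in Set.Ioi b, f₀ t) ≤ ∫ t in Set.Ioi a, f₀ t := by
    intro a b hab
    exact setIntegral_mono_set hf_int.integrableOn
      (Filter.Eventually.of_forall fun t => hf_nonneg t)
      (HasSubset.Subset.eventuallyLE (Set.Ioi_subset_Ioi hab))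
  have hFG : ∀ z : ℝ, (∫ t in Set.Iic z, f₀ t) + (∫ t in Set.Ioi z, f₀ t) = 1 := by
    intro z
    have h := setIntegral_union (f := f₀) (μ := volume)
      (Set.Iic_disjoint_Ioi (le_refl z)) measurableSet_Ioi
      hf_int.integrableOn hf_int.integrableOn
    rw [Set.Iic_union_Ioi] at h
    rw [← h, setIntegral_univ, hf_mass]
  have hAB : A < B := by
    by_contra h
    push_neg at h
    have := hFmono h
    rw [hFA, hFB] at this
    linarith
  have hBC : B < C := by
    by_contra h
    push_neg at h
    have := hFmono h
    rw [hFB, hFC] at this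
    linarith
  have hm1 : (∫ t in Set.Ioc A B, f₀ t) = q - p := by
    have h := setIntegral_union (f := f₀) (μ := volume) (t := Set.Ioc A B)
      (Set.Iic_disjoint_Ioc (le_refl A)) measurableSet_Ioc
      hf_int.integrableOn hf_int.integrableOn
    rw [Set.Iic_union_Ioc_eq_Iic hAB.le] at h
    rw [hFA, hFB] at h
    linarith
  have hm2 : (∫ t in Set.Ioc B C, f₀ t) = r - q := by
    have h := setIntegral_union (f := f₀) (μ := volume) (t := Set.Ioc B C)
      (Set.Iic_disjoint_Ioc (le_refl B)) measurableSet_Ioc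
      hf_int.integrableOn hf_int.integrableOn
    rw [Set.Iic_union_Ioc_eq_Iic hBC.le] at h
    rw [hFB, hFC] at h
    linarith
  have hGA : (∫ t in Set.Ioi A, f₀ t) = 1 - p := by have := hFG A; rw [hFA] at this; linarith
  have hGC : (∫ t in Set.Ioi C, f₀ t) = 1 - r := by have := hFG C; rw [hFC] at this; linarith
  -- first inequality: (B - A)/8 ≤ C - B
  have key1 : ∀ v ∈ Set.Ioc A B, p * (r - q) ≤ r * ((C - B) * f₀ v) := by
    intro v hv
    obtain ⟨hAv, hvB⟩ := hv
    have hptwise : ∀ u ∈ Set.Ioc B C, p * f₀ u ≤ r * f₀ v := by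
      intro u hu
      obtain ⟨hBu, huC⟩ := hu
      have hvu : v ≤ u := hvB.trans hBu.le
      have hRH := revHazardAux f₀ hf_nonneg hf_int hlogconc hvu
      have hFvp : p ≤ ∫ t in Set.Iic v, f₀ t := by rw [← hFA]; exact hFmono hAv.le
      have hFur : (∫ t in Set.Iic u, f₀ t) ≤ r := by rw [← hFC]; exact hFmono huC
      calc p * f₀ u ≤ (∫ t in Set.Iic v, f₀ t) * f₀ u :=
            mul_le_mul_of_nonneg_right hFvp (hf_nonneg u)
        _ = f₀ u * ∫ t in Set.Iic v, f₀ t := mul_comm _ _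
        _ ≤ f₀ v * ∫ t in Set.Iic u, f₀ t := hRH
        _ ≤ f₀ v * r := mul_le_mul_of_nonneg_left hFur (hf_nonneg v)
        _ = r * f₀ v := mul_comm _ _
    have hint : (∫ u in Set.Ioc B C, p * f₀ u) ≤ ∫ _u in Set.Ioc B C, r * f₀ v :=
      setIntegral_mono_on ((hf_int.const_mul p).integrableOn)
        (integrableOn_const measure_Ioc_lt_top.ne) measurableSet_Ioc hptwise
    rw [integral_const_mul, hm2] at hint
    rw [setIntegral_const, measureReal_def, Real.volume_Ioc, ENNReal.toReal_ofReal (by linarith), smul_eq_mul] at hint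
    calc p * (r - q) ≤ (C - B) * (r * f₀ v) := hint
      _ = r * ((C - B) * f₀ v) := by ring
  have hstep2 : (B - A) * (p * (r - q)) ≤ r * ((C - B) * (q - p)) := by
    have hint2 : (∫ _v in Set.Ioc A B, p * (r - q)) ≤
        ∫ v in Set.Ioc A B, r * ((C - B) * f₀ v) :=
      setIntegral_mono_on (integrableOn_const measure_Ioc_lt_top.ne)
        (((hf_int.const_mul _).const_mul _).integrableOn) measurableSet_Ioc key1
    rw [setIntegral_const, measureReal_def, Real.volume_Ioc, ENNReal.toReal_ofReal (by linarith), smul_eq_mul,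
      integral_const_mul, integral_const_mul, hm1] at hint2
    exact hint2
  have hX : 0 < p * (r - q) := mul_pos hp0 (by linarith)
  have goal1 : (B - A) / 8 ≤ C - B := by
    rw [div_le_iff₀ (by norm_num : (0:ℝ) < 8)]
    have h8 : (B - A) * (p * (r - q)) ≤ (C - B) * (8 * (p * (r - q))) := by
      calc (B - A) * (p * (r - q)) ≤ r * ((C - B) * (q - p)) := hstep2
        _ = (C - B) * ((q - p) * r) := by ring
        _ ≤ (C - B) * (8 * (p * (r - q))) := mul_le_mul_of_nonneg_left g5 (by linarith)
    nlinarith [h8, hX]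
  -- second inequality: C - B ≤ 8 * (B - A)
  have key2 : ∀ u ∈ Set.Ioc B C, (1 - r) * (q - p) ≤ (1 - p) * ((B - A) * f₀ u) := by
    intro u hu
    obtain ⟨hBu, huC⟩ := hu
    have hptwise : ∀ v ∈ Set.Ioc A B, (1 - r) * f₀ v ≤ (1 - p) * f₀ u := by
      intro v hv
      obtain ⟨hAv, hvB⟩ := hv
      have hvu : v ≤ u := hvB.trans hBu.le
      have hH := hazardAux f₀ hf_nonneg hf_int hlogconc hvu
      have hGu : 1 - r ≤ ∫ t in Set.Ioi u, f₀ t := by rw [← hGC]; exact hGanti huC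
      have hGv : (∫ t in Set.Ioi v, f₀ t) ≤ 1 - p := by rw [← hGA]; exact hGanti hAv.le
      calc (1 - r) * f₀ v ≤ (∫ t in Set.Ioi u, f₀ t) * f₀ v :=
            mul_le_mul_of_nonneg_right hGu (hf_nonneg v)
        _ = f₀ v * ∫ t in Set.Ioi u, f₀ t := mul_comm _ _
        _ ≤ f₀ u * ∫ t in Set.Ioi v, f₀ t := hH
        _ ≤ f₀ u * (1 - p) := mul_le_mul_of_nonneg_left hGv (hf_nonneg u)
        _ = (1 - p) * f₀ u := mul_comm _ _
    have hint : (∫ v in Set.Ioc A B, (1 - r) * f₀ v) ≤ ∫ _v in Set.Ioc A B, (1 - p) * f₀ u :=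
      setIntegral_mono_on ((hf_int.const_mul _).integrableOn)
        (integrableOn_const measure_Ioc_lt_top.ne) measurableSet_Ioc hptwise
    rw [integral_const_mul, hm1] at hint
    rw [setIntegral_const, measureReal_def, Real.volume_Ioc, ENNReal.toReal_ofReal (by linarith), smul_eq_mul] at hint
    calc (1 - r) * (q - p) ≤ (B - A) * ((1 - p) * f₀ u) := hint
      _ = (1 - p) * ((B - A) * f₀ u) := by ring
  have hstep4 : (C - B) * ((1 - r) * (q - p)) ≤ (1 - p) * ((B - A) * (r - q)) := by
    have hint2 : (∫ _u in Set.Ioc B C, (1 - r) * (q - p)) ≤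
        ∫ u in Set.Ioc B C, (1 - p) * ((B - A) * f₀ u) :=
      setIntegral_mono_on (integrableOn_const measure_Ioc_lt_top.ne)
        (((hf_int.const_mul _).const_mul _).integrableOn) measurableSet_Ioc key2
    rw [setIntegral_const, measureReal_def, Real.volume_Ioc, ENNReal.toReal_ofReal (by linarith), smul_eq_mul,
      integral_const_mul, integral_const_mul, hm2] at hint2
    exact hint2
  have hZ : 0 < (1 - r) * (q - p) := mul_pos (by linarith) (by linarith)
  have goal2 : C - B ≤ 8 * (B - A) := by
    have h8 : (C - B) * ((1 - r) * (q - p)) ≤ (B - A) * (8 * ((1 - r) * (q - p))) := by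
      calc (C - B) * ((1 - r) * (q - p)) ≤ (1 - p) * ((B - A) * (r - q)) := hstep4
        _ = (B - A) * ((r - q) * (1 - p)) := by ring
        _ ≤ (B - A) * (8 * ((q - p) * (1 - r))) := mul_le_mul_of_nonneg_left g6 (by linarith)
        _ = (B - A) * (8 * ((1 - r) * (q - p))) := by ring
    nlinarith [h8, hZ]
  exact ⟨goal1, goal2⟩
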